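/- Let f ∈ ℚ[T] be a monic squarefree polynomial with roots α₁,…,α_r ∈ ℚ̄, and t the class of T in E_f = ℚ[T]/(f). Then ℚ[t^n] = E_f for all n ≥ 1 if and only if for all i ≠ j with α_j ≠ 0, the ratio α_i/α_j is not a root of unity. -/

import Mathlib

open Polynomial

/-- Let `f ∈ ℚ[T]` be monic and squarefree, with roots `α₁, …, α_r` in an algebraic closure
(here `ℂ`), and let `t` be the class of `T` in `E_f = ℚ[T]/(f)`.  Then `ℚ[tⁿ] = E_f` for all
`n ≥ 1` if and only if for all roots `α ≠ β` with `β ≠ 0`, the ratio `α/β` is not a root of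
unity. -/
theorem stmt_11 (f : ℚ[X]) (hmonic : f.Monic) (hsqfree : Squarefree f) :
    (∀ n : ℕ, 1 ≤ n →
        Algebra.adjoin ℚ {(Ideal.Quotient.mk (Ideal.span {f}) X) ^ n} = ⊤) ↔
      ∀ α ∈ (f.map (algebraMap ℚ ℂ)).roots, ∀ β ∈ (f.map (algebraMap ℚ ℂ)).roots,
        α ≠ β → β ≠ 0 → ¬ ∃ m : ℕ, 1 ≤ m ∧ (α / β) ^ m = 1 := by
  have hf0 : f ≠ 0 := hmonic.ne_zero
  have hFmonic : (f.map (algebraMap ℚ ℂ)).Monic := hmonic.map _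
  have hF0 : f.map (algebraMap ℚ ℂ) ≠ 0 := hFmonic.ne_zero
  have hroot : ∀ α ∈ (f.map (algebraMap ℚ ℂ)).roots, aeval α f = 0 := by
    intro α hα
    rw [aeval_def, ← eval_map]
    exact (mem_roots hF0).mp hα
  constructor
  · rintro h α hα β hβ hne hβ0 ⟨m, hm, hpow⟩
    have hαβ : α ^ m = β ^ m := by
      have hb : β ^ m ≠ 0 := pow_ne_zero _ hβ0
      rw [div_pow, div_eq_one_iff_eq hb] at hpow
      exact hpow
    set φa := AdjoinRoot.liftAlgHom f (Algebra.ofId ℚ ℂ) α (by simpa [aeval_def] using hroot α hα) with hφa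
    set φb := AdjoinRoot.liftAlgHom f (Algebra.ofId ℚ ℂ) β (by simpa [aeval_def] using hroot β hβ) with hφb
    have hmem : (AdjoinRoot.root f) ^ m ∈ AlgHom.equalizer φa φb := by
      show φa (AdjoinRoot.root f ^ m) = φb (AdjoinRoot.root f ^ m)
      rw [map_pow, map_pow, AdjoinRoot.liftAlgHom_root, AdjoinRoot.liftAlgHom_root, hαβ]
    have hle : Algebra.adjoin ℚ {(AdjoinRoot.root f) ^ m} ≤ AlgHom.equalizer φa φb :=
      Algebra.adjoin_le (Set.singleton_subset_iff.mpr hmem)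
    have htop : Algebra.adjoin ℚ {(AdjoinRoot.root f) ^ m} = ⊤ := h m hm
    have : AdjoinRoot.root f ∈ AlgHom.equalizer φa φb := by
      apply hle
      rw [htop]
      trivial
    have heqr : φa (AdjoinRoot.root f) = φb (AdjoinRoot.root f) := this
    rw [hφa, hφb, AdjoinRoot.liftAlgHom_root, AdjoinRoot.liftAlgHom_root] at heqr
    exact hne heqr
  · intro h n hn
    have hn0 : n ≠ 0 := by omega
    set t : AdjoinRoot f := AdjoinRoot.root f with ht
    haveI : Module.Finite ℚ (AdjoinRoot f) := (AdjoinRoot.powerBasis (K := ℚ) hf0).finite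
    haveI : Module.Finite ℚ (ℚ[X] ⧸ Ideal.span {f}) :=
      (AdjoinRoot.powerBasis (K := ℚ) hf0).finite
    have hint : IsIntegral ℚ (t ^ n) := IsIntegral.of_finite ℚ _
    set μ := minpoly ℚ (t ^ n) with hμ
    have hμ0 : μ ≠ 0 := minpoly.ne_zero hint
    have hμmap0 : μ.map (algebraMap ℚ ℂ) ≠ 0 :=
      (Polynomial.map_ne_zero_iff (algebraMap ℚ ℂ).injective).mpr hμ0
    -- each α^n is a root of μ mapped to ℂ
    have hrootμ : ∀ α ∈ (f.map (algebraMap ℚ ℂ)).roots,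
        α ^ n ∈ (μ.map (algebraMap ℚ ℂ)).roots := by
      intro α hα
      refine (mem_roots hμmap0).mpr ?_
      have h2 : aeval ((AdjoinRoot.liftAlgHom f (Algebra.ofId ℚ ℂ) α (by simpa [aeval_def] using hroot α hα)) (t ^ n)) μ = 0 := by
        rw [aeval_algHom_apply, minpoly.aeval, map_zero]
      rw [map_pow, AdjoinRoot.liftAlgHom_root] at h2
      show eval (α ^ n) (μ.map (algebraMap ℚ ℂ)) = 0
      rw [eval_map, ← aeval_def]
      exact h2
    -- distinctness of the α^n
    have hsep : f.Separable := PerfectField.separable_iff_squarefree.mpr hsqfree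
    have hnodup : (f.map (algebraMap ℚ ℂ)).roots.Nodup := nodup_roots (hsep.map)
    have hinj : ∀ a ∈ (f.map (algebraMap ℚ ℂ)).roots, ∀ b ∈ (f.map (algebraMap ℚ ℂ)).roots,
        a ^ n = b ^ n → a = b := by
      intro a ha b hb hab
      by_cases hb0 : b = 0
      · subst hb0
        rw [zero_pow hn0] at hab
        exact (pow_eq_zero_iff hn0).mp hab
      · by_contra hne
        exact h a ha b hb hne hb0 ⟨n, hn, by
          rw [div_pow, hab, div_self (pow_ne_zero _ hb0)]⟩
    have hnd : ((f.map (algebraMap ℚ ℂ)).roots.map (· ^ n)).Nodup :=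
      hnodup.map_on hinj
    -- counting
    have hcardroots : Multiset.card (f.map (algebraMap ℚ ℂ)).roots = f.natDegree := by
      rw [← (hmonic.natDegree_map (algebraMap ℚ ℂ))]
      exact (splits_iff_card_roots.mp (IsAlgClosed.splits _))
    have hsub : ((f.map (algebraMap ℚ ℂ)).roots.map (· ^ n)).toFinset ⊆
        (μ.map (algebraMap ℚ ℂ)).roots.toFinset := by
      intro x hx
      rw [Multiset.mem_toFinset] at hx ⊢
      obtain ⟨a, ha, rfl⟩ := Multiset.mem_map.mp hx
      exact hrootμ a ha
    have hdegle : f.natDegree ≤ μ.natDegree := by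
      calc f.natDegree = Multiset.card ((f.map (algebraMap ℚ ℂ)).roots.map (· ^ n)) := by
            rw [Multiset.card_map, hcardroots]
        _ = ((f.map (algebraMap ℚ ℂ)).roots.map (· ^ n)).toFinset.card :=
            (Multiset.toFinset_card_of_nodup hnd).symm
        _ ≤ (μ.map (algebraMap ℚ ℂ)).roots.toFinset.card := Finset.card_le_card hsub
        _ ≤ Multiset.card (μ.map (algebraMap ℚ ℂ)).roots := Multiset.toFinset_card_le _
        _ ≤ (μ.map (algebraMap ℚ ℂ)).natDegree := card_roots' _
        _ = μ.natDegree := natDegree_map _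
    -- finrank computation
    have hfr1 : Module.finrank ℚ (Algebra.adjoin ℚ {t ^ n}) = μ.natDegree := by
      rw [(Algebra.adjoin.powerBasis hint).finrank, Algebra.adjoin.powerBasis_dim]
    have hfrE : Module.finrank ℚ (AdjoinRoot f) = f.natDegree := by
      rw [(AdjoinRoot.powerBasis (K := ℚ) hf0).finrank, AdjoinRoot.powerBasis_dim]
    have hle2 : Module.finrank ℚ (Algebra.adjoin ℚ {t ^ n}) ≤
        Module.finrank ℚ (AdjoinRoot f) :=
      Submodule.finrank_le (Subalgebra.toSubmodule (Algebra.adjoin ℚ {t ^ n}))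
    have heq : Module.finrank ℚ
        (Subalgebra.toSubmodule (Algebra.adjoin ℚ {t ^ n}) : Submodule ℚ (AdjoinRoot f)) =
        Module.finrank ℚ (AdjoinRoot f) := by
      rw [(Algebra.adjoin ℚ {t ^ n}).finrank_toSubmodule]
      refine le_antisymm hle2 ?_
      rw [hfr1, hfrE]
      exact hdegle
    exact Algebra.toSubmodule_eq_top.mp (Submodule.eq_top_of_finrank_eq heq)
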